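/- The class of linearly ordered sets equipped with one order preserving (monotone) unary operation has the strong amalgamation property: whenever A, B, C are linearly ordered sets with monotone unary operations f_A, f_B, f_C and i_A : C → A, i_B : C → B are order embeddings satisfying i_A ∘ f_C = f_A ∘ i_A and i_B ∘ f_C = f_B ∘ i_B, there exist a linearly ordered set D with a monotone unary operation f_D and order embeddings j_A : A → D, j_B : B → D commuting with the operations, such that j_A ∘ i_A = j_B ∘ i_B and range(j_A) ∩ range(j_B) = range(j_A ∘ i_A). -/

import Mathlib

/-- A linearly ordered set equipped with one order preserving (monotone) unary
operation. -/
structure LinOrderMono where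
  carrier : Type
  [linOrd : LinearOrder carrier]
  f : carrier → carrier
  mono : Monotone f

attribute [instance] LinOrderMono.linOrd

namespace StrongAmalgAux

variable {A B C : LinOrderMono}

section Defs

variable (iA : C.carrier ↪o A.carrier) (iB : C.carrier ↪o B.carrier)

/-- `a` is weakly separated below `b` by an element of `C`. -/
def wsep (a : A.carrier) (b : B.carrier) : Prop := ∃ c, a ≤ iA c ∧ iB c ≤ b

/-- `b` is weakly separated below `a` by an element of `C`. -/
def wsep' (b : B.carrier) (a : A.carrier) : Prop := ∃ c, b ≤ iB c ∧ iA c ≤ a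

/-- `a` is strictly separated below `b` by an element of `C`. -/
def sep (a : A.carrier) (b : B.carrier) : Prop :=
  ∃ c, (a < iA c ∧ iB c ≤ b) ∨ (a ≤ iA c ∧ iB c < b)

/-- `b` is strictly separated below `a` by an element of `C`. -/
def sep' (b : B.carrier) (a : A.carrier) : Prop :=
  ∃ c, (b < iB c ∧ iA c ≤ a) ∨ (b ≤ iB c ∧ iA c < a)

/-- `a` and `b` are both the image of the same element of `C`. -/
def eqr (a : A.carrier) (b : B.carrier) : Prop := ∃ c, iA c = a ∧ iB c = b

/-- `a` and `b` sit in the same gap of `C`. -/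
def tie (a : A.carrier) (b : B.carrier) : Prop :=
  ¬ sep iA iB a b ∧ ¬ sep' iA iB b a ∧ ¬ eqr iA iB a b

/-- `b` comes strictly before `a` in the amalgam: after finitely many tied
iterations of the operations, `b`'s iterate is strictly separated below `a`'s. -/
def below (b : B.carrier) (a : A.carrier) : Prop :=
  ∃ n, (∀ k < n, tie iA iB (A.f^[k] a) (B.f^[k] b)) ∧
    sep' iA iB (B.f^[n] b) (A.f^[n] a)

end Defs

variable {iA : C.carrier ↪o A.carrier} {iB : C.carrier ↪o B.carrier}

lemma sep_wsep {a b} (h : sep iA iB a b) : wsep iA iB a b := by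
  obtain ⟨c, h⟩ := h
  rcases h with ⟨h1, h2⟩ | ⟨h1, h2⟩
  · exact ⟨c, le_of_lt h1, h2⟩
  · exact ⟨c, h1, le_of_lt h2⟩

lemma sep'_wsep' {a b} (h : sep' iA iB b a) : wsep' iA iB b a := by
  obtain ⟨c, h⟩ := h
  rcases h with ⟨h1, h2⟩ | ⟨h1, h2⟩
  · exact ⟨c, le_of_lt h1, h2⟩
  · exact ⟨c, h1, le_of_lt h2⟩

lemma eqr_wsep {a b} (h : eqr iA iB a b) : wsep iA iB a b := by
  obtain ⟨c, h1, h2⟩ := h; exact ⟨c, le_of_eq h1.symm, le_of_eq h2⟩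

lemma eqr_wsep' {a b} (h : eqr iA iB a b) : wsep' iA iB b a := by
  obtain ⟨c, h1, h2⟩ := h; exact ⟨c, le_of_eq h2.symm, le_of_eq h1⟩

lemma wsep_dich {a b} (h : wsep iA iB a b) : sep iA iB a b ∨ eqr iA iB a b := by
  obtain ⟨c, h1, h2⟩ := h
  rcases lt_or_eq_of_le h1 with h1' | h1'
  · exact Or.inl ⟨c, Or.inl ⟨h1', h2⟩⟩
  rcases lt_or_eq_of_le h2 with h2' | h2'
  · exact Or.inl ⟨c, Or.inr ⟨h1, h2'⟩⟩
  · exact Or.inr ⟨c, h1'.symm, h2'⟩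

lemma wsep'_dich {a b} (h : wsep' iA iB b a) : sep' iA iB b a ∨ eqr iA iB a b := by
  obtain ⟨c, h1, h2⟩ := h
  rcases lt_or_eq_of_le h1 with h1' | h1'
  · exact Or.inl ⟨c, Or.inl ⟨h1', h2⟩⟩
  rcases lt_or_eq_of_le h2 with h2' | h2'
  · exact Or.inl ⟨c, Or.inr ⟨h1, h2'⟩⟩
  · exact Or.inr ⟨c, h2', h1'.symm⟩

lemma wsep_sep' {a b} (h : wsep iA iB a b) (h' : sep' iA iB b a) : False := by
  obtain ⟨c, h1, h2⟩ := h
  obtain ⟨c', hc'⟩ := h'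
  rcases hc' with ⟨h3, h4⟩ | ⟨h3, h4⟩
  · have hlt : c < c' := iB.lt_iff_lt.mp (lt_of_le_of_lt h2 h3)
    have hle : c' ≤ c := iA.le_iff_le.mp (le_trans h4 h1)
    exact absurd hlt (not_lt.mpr hle)
  · have hle : c ≤ c' := iB.le_iff_le.mp (le_trans h2 h3)
    have hlt : c' < c := iA.lt_iff_lt.mp (lt_of_lt_of_le h4 h1)
    exact absurd hlt (not_lt.mpr hle)

lemma wsep'_sep {a b} (h : wsep' iA iB b a) (h' : sep iA iB a b) : False := by
  obtain ⟨c, h1, h2⟩ := h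
  obtain ⟨c', hc'⟩ := h'
  rcases hc' with ⟨h3, h4⟩ | ⟨h3, h4⟩
  · have hlt : c < c' := iA.lt_iff_lt.mp (lt_of_le_of_lt h2 h3)
    have hle : c' ≤ c := iB.le_iff_le.mp (le_trans h4 h1)
    exact absurd hlt (not_lt.mpr hle)
  · have hle : c ≤ c' := iA.le_iff_le.mp (le_trans h2 h3)
    have hlt : c' < c := iB.lt_iff_lt.mp (lt_of_lt_of_le h4 h1)
    exact absurd hlt (not_lt.mpr hle)

lemma tie_not_wsep {a b} (ht : tie iA iB a b) (hw : wsep iA iB a b) : False := by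
  rcases wsep_dich hw with h | h
  · exact ht.1 h
  · exact ht.2.2 h

lemma tie_not_wsep' {a b} (ht : tie iA iB a b) (hw : wsep' iA iB b a) : False := by
  rcases wsep'_dich hw with h | h
  · exact ht.2.1 h
  · exact ht.2.2 h

lemma not_tie_cases {a b} (h : ¬ tie iA iB a b) :
    sep iA iB a b ∨ sep' iA iB b a ∨ eqr iA iB a b := by
  unfold tie at h
  by_cases h1 : sep iA iB a b
  · exact Or.inl h1
  by_cases h2 : sep' iA iB b a
  · exact Or.inr (Or.inl h2)
  by_cases h3 : eqr iA iB a b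
  · exact Or.inr (Or.inr h3)
  · exact absurd ⟨h1, h2, h3⟩ h

/-- In a tie neither element is the image of an element of `C` (B-side). -/
lemma tie_no_rangeB {a b} (ht : tie iA iB a b) (h : ∃ c, iB c = b) : False := by
  obtain ⟨c, hc⟩ := h
  have h1 : iA c ≤ a := by
    by_contra hcon
    exact ht.1 ⟨c, Or.inl ⟨not_le.mp hcon, le_of_eq hc⟩⟩
  have h2 : a ≤ iA c := by
    by_contra hcon
    exact ht.2.1 ⟨c, Or.inr ⟨le_of_eq hc.symm, not_le.mp hcon⟩⟩
  exact ht.2.2 ⟨c, le_antisymm h1 h2, hc⟩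

/-- In a tie neither element is the image of an element of `C` (A-side). -/
lemma tie_no_rangeA {a b} (ht : tie iA iB a b) (h : ∃ c, iA c = a) : False := by
  obtain ⟨c, hc⟩ := h
  have h1 : iB c ≤ b := by
    by_contra hcon
    exact ht.2.1 ⟨c, Or.inl ⟨not_le.mp hcon, le_of_eq hc⟩⟩
  have h2 : b ≤ iB c := by
    by_contra hcon
    exact ht.1 ⟨c, Or.inr ⟨le_of_eq hc.symm, not_le.mp hcon⟩⟩
  exact ht.2.2 ⟨c, hc, le_antisymm h1 h2⟩

lemma sep'_mono_a {a a' b} (h : sep' iA iB b a) (haa : a ≤ a') : sep' iA iB b a' := by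
  obtain ⟨c, hc⟩ := h
  rcases hc with ⟨h1, h2⟩ | ⟨h1, h2⟩
  · exact ⟨c, Or.inl ⟨h1, le_trans h2 haa⟩⟩
  · exact ⟨c, Or.inr ⟨h1, lt_of_lt_of_le h2 haa⟩⟩

lemma sep'_anti_b {a b b'} (h : sep' iA iB b' a) (hbb : b ≤ b') : sep' iA iB b a := by
  obtain ⟨c, hc⟩ := h
  rcases hc with ⟨h1, h2⟩ | ⟨h1, h2⟩
  · exact ⟨c, Or.inl ⟨lt_of_le_of_lt hbb h1, h2⟩⟩
  · exact ⟨c, Or.inr ⟨le_trans hbb h1, h2⟩⟩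

lemma wsep_mono_a {a a' b} (h : wsep iA iB a' b) (haa : a ≤ a') : wsep iA iB a b := by
  obtain ⟨c, h1, h2⟩ := h; exact ⟨c, le_trans haa h1, h2⟩

lemma wsep_mono_b {a b b'} (h : wsep iA iB a b) (hbb : b ≤ b') : wsep iA iB a b' := by
  obtain ⟨c, h1, h2⟩ := h; exact ⟨c, h1, le_trans h2 hbb⟩

/-- Key monotonicity lemma: `below` is monotone in the `A`-argument. -/
lemma below_mono_a {a a' b} (h : below iA iB b a) (haa : a ≤ a') : below iA iB b a' := by
  classical
  obtain ⟨n, h1, h2⟩ := h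
  have hm : ∀ k, A.f^[k] a ≤ A.f^[k] a' := fun k => A.mono.iterate k haa
  by_cases hall : ∀ k < n, tie iA iB (A.f^[k] a') (B.f^[k] b)
  · exact ⟨n, hall, sep'_mono_a h2 (hm n)⟩
  · push_neg at hall
    obtain ⟨k0, hk0n, hk0⟩ := hall
    have hex : ∃ k, k < n ∧ ¬ tie iA iB (A.f^[k] a') (B.f^[k] b) := ⟨k0, hk0n, hk0⟩
    obtain ⟨hkn, hknt⟩ := Nat.find_spec hex
    set k := Nat.find hex with hkdef
    have hmin : ∀ j < k, tie iA iB (A.f^[j] a') (B.f^[j] b) := by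
      intro j hj
      by_contra hc
      exact Nat.find_min hex hj ⟨lt_trans hj hkn, hc⟩
    have htk : tie iA iB (A.f^[k] a) (B.f^[k] b) := h1 k hkn
    rcases not_tie_cases hknt with hs | hs | hs
    · exact absurd (wsep_mono_a (sep_wsep hs) (hm k)) (fun hw => tie_not_wsep htk hw)
    · exact ⟨k, hmin, hs⟩
    · obtain ⟨c, _, hcb⟩ := hs
      exact absurd ⟨c, hcb⟩ (fun hr => tie_no_rangeB htk hr)

/-- Key monotonicity lemma: `below` is antitone in the `B`-argument. -/
lemma below_anti_b {a b b'} (h : below iA iB b' a) (hbb : b ≤ b') : below iA iB b a := by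
  classical
  obtain ⟨n, h1, h2⟩ := h
  have hm : ∀ k, B.f^[k] b ≤ B.f^[k] b' := fun k => B.mono.iterate k hbb
  by_cases hall : ∀ k < n, tie iA iB (A.f^[k] a) (B.f^[k] b)
  · exact ⟨n, hall, sep'_anti_b h2 (hm n)⟩
  · push_neg at hall
    obtain ⟨k0, hk0n, hk0⟩ := hall
    have hex : ∃ k, k < n ∧ ¬ tie iA iB (A.f^[k] a) (B.f^[k] b) := ⟨k0, hk0n, hk0⟩
    obtain ⟨hkn, hknt⟩ := Nat.find_spec hex
    set k := Nat.find hex with hkdef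
    have hmin : ∀ j < k, tie iA iB (A.f^[j] a) (B.f^[j] b) := by
      intro j hj
      by_contra hc
      exact Nat.find_min hex hj ⟨lt_trans hj hkn, hc⟩
    have htk : tie iA iB (A.f^[k] a) (B.f^[k] b') := h1 k hkn
    rcases not_tie_cases hknt with hs | hs | hs
    · exact absurd (wsep_mono_b (sep_wsep hs) (hm k)) (fun hw => tie_not_wsep htk hw)
    · exact ⟨k, hmin, hs⟩
    · exact absurd (wsep_mono_b (eqr_wsep hs) (hm k)) (fun hw => tie_not_wsep htk hw)

section WithComm

variable (hA : ∀ c, iA (C.f c) = A.f (iA c)) (hB : ∀ c, iB (C.f c) = B.f (iB c))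
include hA hB

lemma wsep_f {a b} (h : wsep iA iB a b) : wsep iA iB (A.f a) (B.f b) := by
  obtain ⟨c, h1, h2⟩ := h
  refine ⟨C.f c, ?_, ?_⟩
  · rw [hA]; exact A.mono h1
  · rw [hB]; exact B.mono h2

lemma wsep'_f {a b} (h : wsep' iA iB b a) : wsep' iA iB (B.f b) (A.f a) := by
  obtain ⟨c, h1, h2⟩ := h
  refine ⟨C.f c, ?_, ?_⟩
  · rw [hB]; exact B.mono h1
  · rw [hA]; exact A.mono h2

lemma eqr_f {a b} (h : eqr iA iB a b) : eqr iA iB (A.f a) (B.f b) := by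
  obtain ⟨c, h1, h2⟩ := h
  exact ⟨C.f c, by rw [hA, h1], by rw [hB, h2]⟩

/-- If `f b` is below `f a` then `b` is below `a`. -/
lemma below_f_rev {a b} (h : below iA iB (B.f b) (A.f a)) : below iA iB b a := by
  by_cases ht : tie iA iB a b
  · obtain ⟨n, h1, h2⟩ := h
    refine ⟨n + 1, ?_, ?_⟩
    · intro k hk
      cases k with
      | zero => simpa using ht
      | succ j =>
        rw [Function.iterate_succ_apply, Function.iterate_succ_apply]
        exact h1 j (by omega)
    · rw [Function.iterate_succ_apply, Function.iterate_succ_apply]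
      exact h2
  · by_cases hs : sep' iA iB b a
    · exact ⟨0, by simp, by simpa using hs⟩
    · exfalso
      have hw : wsep iA iB a b := by
        rcases not_tie_cases ht with h' | h' | h'
        · exact sep_wsep h'
        · exact absurd h' hs
        · exact eqr_wsep h'
      have hw2 : wsep iA iB (A.f a) (B.f b) := wsep_f hA hB hw
      obtain ⟨n, h1, h2⟩ := h
      cases n with
      | zero => exact wsep_sep' hw2 (by simpa using h2)
      | succ m =>
        have := h1 0 (by omega)
        simp only [Function.iterate_zero_apply] at this
        exact tie_not_wsep this hw2

/-- If `b` is below `a` then `f b` is below `f a` or they are identified. -/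
lemma below_f_fwd {a b} (h : below iA iB b a) :
    below iA iB (B.f b) (A.f a) ∨ eqr iA iB (A.f a) (B.f b) := by
  obtain ⟨n, h1, h2⟩ := h
  cases n with
  | zero =>
    have hw : wsep' iA iB b a := sep'_wsep' (by simpa using h2)
    rcases wsep'_dich (wsep'_f hA hB hw) with hs | he
    · exact Or.inl ⟨0, by simp, by simpa using hs⟩
    · exact Or.inr he
  | succ m =>
    refine Or.inl ⟨m, ?_, ?_⟩
    · intro k hk
      have := h1 (k + 1) (by omega)
      rwa [Function.iterate_succ_apply, Function.iterate_succ_apply] at this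
    · have := h2
      rwa [Function.iterate_succ_apply, Function.iterate_succ_apply] at this

end WithComm

/-! ### The carrier of the amalgam -/

/-- The identification relation on `A ⊕ B`. -/
def R (iA : C.carrier ↪o A.carrier) (iB : C.carrier ↪o B.carrier) :
    A.carrier ⊕ B.carrier → A.carrier ⊕ B.carrier → Prop
  | Sum.inl a, Sum.inl a' => a = a'
  | Sum.inl a, Sum.inr b => eqr iA iB a b
  | Sum.inr b, Sum.inl a => eqr iA iB a b
  | Sum.inr b, Sum.inr b' => b = b'

lemma eqr_unique_a {a a' b} (h : eqr iA iB a b) (h' : eqr iA iB a' b) : a = a' := by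
  obtain ⟨c, hc1, hc2⟩ := h
  obtain ⟨c', hc1', hc2'⟩ := h'
  have : c = c' := iB.injective (hc2.trans hc2'.symm)
  rw [← hc1, ← hc1', this]

lemma eqr_unique_b {a b b'} (h : eqr iA iB a b) (h' : eqr iA iB a b') : b = b' := by
  obtain ⟨c, hc1, hc2⟩ := h
  obtain ⟨c', hc1', hc2'⟩ := h'
  have : c = c' := iA.injective (hc1.trans hc1'.symm)
  rw [← hc2, ← hc2', this]

/-- `R` is an equivalence relation. -/
def amalgSetoid (iA : C.carrier ↪o A.carrier) (iB : C.carrier ↪o B.carrier) :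
    Setoid (A.carrier ⊕ B.carrier) where
  r := R iA iB
  iseqv := by
    constructor
    · intro x; cases x <;> rfl
    · intro x y h
      cases x <;> cases y <;> simp only [R] at h ⊢ <;> first | exact h.symm | exact h
    · intro x y z h1 h2
      cases x <;> cases y <;> cases z <;> simp only [R] at h1 h2 ⊢
      · exact h1.trans h2
      · exact h1 ▸ h2
      · exact eqr_unique_a h1 h2
      · exact h2 ▸ h1
      · exact h2 ▸ h1
      · exact eqr_unique_b h1 h2
      · exact h1 ▸ h2
      · exact h1.trans h2

/-- The order relation on `A ⊕ B`. -/
def le0 (iA : C.carrier ↪o A.carrier) (iB : C.carrier ↪o B.carrier) :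
    A.carrier ⊕ B.carrier → A.carrier ⊕ B.carrier → Prop
  | Sum.inl a, Sum.inl a' => a ≤ a'
  | Sum.inl a, Sum.inr b => ¬ below iA iB b a
  | Sum.inr b, Sum.inl a => below iA iB b a ∨ eqr iA iB a b
  | Sum.inr b, Sum.inr b' => b ≤ b'

/-! Well-definedness lemmas for `le0` with respect to `R`. -/

lemma W1 {a b} (h : eqr iA iB a b) (a'' : A.carrier) :
    a ≤ a'' ↔ (below iA iB b a'' ∨ eqr iA iB a'' b) := by
  obtain ⟨c, hc1, hc2⟩ := h
  constructor
  · intro hle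
    rcases lt_or_eq_of_le hle with hlt | heq
    · exact Or.inl ⟨0, by simp, by
        simp only [Function.iterate_zero_apply]
        exact ⟨c, Or.inr ⟨le_of_eq hc2.symm, lt_of_eq_of_lt hc1 hlt⟩⟩⟩
    · exact Or.inr ⟨c, hc1.trans heq, hc2⟩
  · rintro (⟨n, h1, h2⟩ | he)
    · cases n with
      | zero =>
        simp only [Function.iterate_zero_apply] at h2
        obtain ⟨c', hc'⟩ := h2
        rcases hc' with ⟨h3, h4⟩ | ⟨h3, h4⟩
        · have : c < c' := iB.lt_iff_lt.mp (lt_of_eq_of_lt hc2 h3)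
          calc a = iA c := hc1.symm
          _ ≤ iA c' := iA.monotone (le_of_lt this)
          _ ≤ a'' := h4
        · have : c ≤ c' := iB.le_iff_le.mp (hc2.le.trans h3)
          calc a = iA c := hc1.symm
          _ ≤ iA c' := iA.monotone this
          _ ≤ a'' := le_of_lt h4
      | succ m =>
        exfalso
        have := h1 0 (by omega)
        simp only [Function.iterate_zero_apply] at this
        exact tie_no_rangeB this ⟨c, hc2⟩
    · obtain ⟨c', hc1', hc2'⟩ := he
      have : c' = c := iB.injective (hc2'.trans hc2.symm)
      rw [← hc1, ← hc1', this]

lemma W2 {a b} (h : eqr iA iB a b) (b'' : B.carrier) :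
    ¬ below iA iB b'' a ↔ b ≤ b'' := by
  obtain ⟨c, hc1, hc2⟩ := h
  constructor
  · intro hnb
    by_contra hcon
    exact hnb ⟨0, by simp, by
      simp only [Function.iterate_zero_apply]
      exact ⟨c, Or.inl ⟨lt_of_lt_of_eq (not_le.mp hcon) hc2.symm, le_of_eq hc1⟩⟩⟩
  · intro hle
    rintro ⟨n, h1, h2⟩
    cases n with
    | zero =>
      simp only [Function.iterate_zero_apply] at h2
      obtain ⟨c', hc'⟩ := h2
      rcases hc' with ⟨h3, h4⟩ | ⟨h3, h4⟩
      · have hcc : c' ≤ c := iA.le_iff_le.mp (h4.trans hc1.ge)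
        have hx : iB c' ≤ b'' := le_trans (iB.monotone hcc) (hc2.le.trans hle)
        exact absurd h3 (not_lt.mpr hx)
      · have hcc : c' < c := iA.lt_iff_lt.mp (h4.trans_le hc1.ge)
        have hx : iB c' < iB c := iB.strictMono hcc
        exact absurd (lt_of_le_of_lt h3 (lt_of_lt_of_le hx (hc2.le.trans hle))) (lt_irrefl b'')
    | succ m =>
      have := h1 0 (by omega)
      simp only [Function.iterate_zero_apply] at this
      exact tie_no_rangeA this ⟨c, hc1⟩

lemma W3 {a b} (h : eqr iA iB a b) (a'' : A.carrier) :
    a'' ≤ a ↔ ¬ below iA iB b a'' := by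
  obtain ⟨c, hc1, hc2⟩ := h
  constructor
  · intro hle
    rintro ⟨n, h1, h2⟩
    cases n with
    | zero =>
      simp only [Function.iterate_zero_apply] at h2
      obtain ⟨c', hc'⟩ := h2
      rcases hc' with ⟨h3, h4⟩ | ⟨h3, h4⟩
      · have hcc : c < c' := iB.lt_iff_lt.mp (lt_of_eq_of_lt hc2 h3)
        have hx : a'' < a'' :=
          lt_of_lt_of_le (lt_of_le_of_lt (hle.trans hc1.symm.le) (iA.strictMono hcc)) h4
        exact absurd hx (lt_irrefl a'')
      · have hcc : c ≤ c' := iB.le_iff_le.mp (hc2.le.trans h3)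
        have hx : a ≤ iA c' := hc1.symm.le.trans (iA.monotone hcc)
        exact absurd (lt_of_le_of_lt (hle.trans hx) h4) (lt_irrefl a'')
    | succ m =>
      have := h1 0 (by omega)
      simp only [Function.iterate_zero_apply] at this
      exact tie_no_rangeB this ⟨c, hc2⟩
  · intro hnb
    by_contra hcon
    exact hnb ⟨0, by simp, by
      simp only [Function.iterate_zero_apply]
      exact ⟨c, Or.inr ⟨le_of_eq hc2.symm, lt_of_eq_of_lt hc1 (not_le.mp hcon)⟩⟩⟩

lemma W4 {a b} (h : eqr iA iB a b) (b'' : B.carrier) :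
    (below iA iB b'' a ∨ eqr iA iB a b'') ↔ b'' ≤ b := by
  obtain ⟨c, hc1, hc2⟩ := h
  constructor
  · rintro (⟨n, h1, h2⟩ | he)
    · cases n with
      | zero =>
        simp only [Function.iterate_zero_apply] at h2
        obtain ⟨c', hc'⟩ := h2
        rcases hc' with ⟨h3, h4⟩ | ⟨h3, h4⟩
        · have hcc : c' ≤ c := iA.le_iff_le.mp (h4.trans hc1.ge)
          exact le_trans (le_of_lt h3) ((iB.monotone hcc).trans hc2.le)
        · have hcc : c' < c := iA.lt_iff_lt.mp (h4.trans_le hc1.ge)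
          exact le_trans h3 (le_of_lt ((iB.strictMono hcc).trans_le hc2.le))
      | succ m =>
        exfalso
        have := h1 0 (by omega)
        simp only [Function.iterate_zero_apply] at this
        exact tie_no_rangeA this ⟨c, hc1⟩
    · obtain ⟨c', hc1', hc2'⟩ := he
      have : c' = c := iA.injective (hc1'.trans hc1.symm)
      rw [← hc2, ← hc2', this]
  · intro hle
    rcases lt_or_eq_of_le hle with hlt | heq
    · exact Or.inl ⟨0, by simp, by
        simp only [Function.iterate_zero_apply]
        exact ⟨c, Or.inl ⟨hlt.trans_eq hc2.symm, le_of_eq hc1⟩⟩⟩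
    · exact Or.inr ⟨c, hc1, hc2.trans heq.symm⟩

lemma le0_wd_left {x x' y} (h : R iA iB x x') : le0 iA iB x y ↔ le0 iA iB x' y := by
  cases x <;> cases x' <;> simp only [R] at h
  · rw [h]
  · cases y
    · exact W1 h _
    · exact W2 h _
  · cases y
    · exact (W1 h _).symm
    · exact (W2 h _).symm
  · rw [h]

lemma le0_wd_right {x y y'} (h : R iA iB y y') : le0 iA iB x y ↔ le0 iA iB x y' := by
  cases y <;> cases y' <;> simp only [R] at h
  · rw [h]
  · cases x
    · exact W3 h _
    · exact W4 h _
  · cases x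
    · exact (W3 h _).symm
    · exact (W4 h _).symm
  · rw [h]

lemma le0_refl (x : A.carrier ⊕ B.carrier) : le0 iA iB x x := by
  cases x <;> simp [le0]

lemma le0_trans {x y z : A.carrier ⊕ B.carrier}
    (h1 : le0 iA iB x y) (h2 : le0 iA iB y z) : le0 iA iB x z := by
  cases x <;> cases y <;> cases z <;> simp only [le0] at h1 h2 ⊢
  case inl.inl.inl => exact le_trans h1 h2
  case inl.inl.inr a a' b => exact fun hb => h2 (below_mono_a hb h1)
  case inl.inr.inl a b a' =>
    by_contra hcon
    have haa : a' < a := not_le.mp hcon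
    rcases h2 with hb | he
    · exact h1 (below_mono_a hb (le_of_lt haa))
    · obtain ⟨c, hc1, hc2⟩ := he
      exact h1 ⟨0, by simp, by
        simp only [Function.iterate_zero_apply]
        exact ⟨c, Or.inr ⟨le_of_eq hc2.symm, lt_of_eq_of_lt hc1 haa⟩⟩⟩
  case inl.inr.inr a b b' => exact fun hb => h1 (below_anti_b hb h2)
  case inr.inl.inl b a a' =>
    rcases h1 with hb | he
    · exact Or.inl (below_mono_a hb h2)
    · obtain ⟨c, hc1, hc2⟩ := he
      rcases lt_or_eq_of_le (hc1.le.trans h2 : iA c ≤ a') with hlt | heq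
      · exact Or.inl ⟨0, by simp, by
          simp only [Function.iterate_zero_apply]
          exact ⟨c, Or.inr ⟨le_of_eq hc2.symm, hlt⟩⟩⟩
      · exact Or.inr ⟨c, heq, hc2⟩
  case inr.inl.inr b a b' =>
    by_contra hcon
    have hbb : b' < b := not_le.mp hcon
    rcases h1 with hb | he
    · exact h2 (below_anti_b hb (le_of_lt hbb))
    · obtain ⟨c, hc1, hc2⟩ := he
      exact h2 ⟨0, by simp, by
        simp only [Function.iterate_zero_apply]
        exact ⟨c, Or.inl ⟨hbb.trans_eq hc2.symm, le_of_eq hc1⟩⟩⟩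
  case inr.inr.inl b b' a =>
    rcases h2 with hb | he
    · exact Or.inl (below_anti_b hb h1)
    · obtain ⟨c, hc1, hc2⟩ := he
      rcases lt_or_eq_of_le (h1.trans hc2.symm.le : b ≤ iB c) with hlt | heq
      · exact Or.inl ⟨0, by simp, by
          simp only [Function.iterate_zero_apply]
          exact ⟨c, Or.inl ⟨hlt, le_of_eq hc1⟩⟩⟩
      · exact Or.inr ⟨c, hc1, heq.symm⟩
  case inr.inr.inr => exact le_trans h1 h2

lemma le0_antisymm {x y : A.carrier ⊕ B.carrier}
    (h1 : le0 iA iB x y) (h2 : le0 iA iB y x) : R iA iB x y := by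
  cases x <;> cases y <;> simp only [le0, R] at h1 h2 ⊢
  · exact le_antisymm h1 h2
  · exact h2.resolve_left h1
  · exact h1.resolve_left h2
  · exact le_antisymm h1 h2

lemma le0_total (x y : A.carrier ⊕ B.carrier) : le0 iA iB x y ∨ le0 iA iB y x := by
  classical
  cases x with
  | inl a =>
    cases y with
    | inl a' => exact le_total a a'
    | inr b =>
      by_cases h : below iA iB b a
      · exact Or.inr (Or.inl h)
      · exact Or.inl h
  | inr b =>
    cases y with
    | inl a =>
      by_cases h : below iA iB b a
      · exact Or.inl (Or.inl h)
      · exact Or.inr h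
    | inr b' => exact le_total b b'

end StrongAmalgAux

/-- The class of linearly ordered sets with one order preserving unary operation
has the strong amalgamation property. -/
theorem linear_orders_one_monotone_op_strong_amalgamation
    (A B C : LinOrderMono)
    (iA : C.carrier ↪o A.carrier) (iB : C.carrier ↪o B.carrier)
    (hA : ∀ c, iA (C.f c) = A.f (iA c))
    (hB : ∀ c, iB (C.f c) = B.f (iB c)) :
    ∃ (D : LinOrderMono) (jA : A.carrier ↪o D.carrier)
      (jB : B.carrier ↪o D.carrier),
      (∀ a, jA (A.f a) = D.f (jA a)) ∧
      (∀ b, jB (B.f b) = D.f (jB b)) ∧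
      (∀ c, jA (iA c) = jB (iB c)) ∧
      Set.range jA ∩ Set.range jB = Set.range (fun c => jA (iA c)) := by
  classical
  open StrongAmalgAux in
  -- The carrier of the amalgam
  let S := amalgSetoid iA iB
  let Q := Quotient S
  let le : Q → Q → Prop := Quotient.lift₂ (le0 iA iB)
    (fun x y x' y' hx hy => propext ((le0_wd_left hx).trans (le0_wd_right hy)))
  have hle_mk : ∀ x y, le ⟦x⟧ ⟦y⟧ = le0 iA iB x y := fun x y => rfl
  let linQ : LinearOrder Q :=
    { le := le
      le_refl := fun x => Quotient.inductionOn x le0_refl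
      le_trans := fun x y z => Quotient.inductionOn₃ x y z
        (fun x y z h1 h2 => le0_trans h1 h2)
      le_antisymm := fun x y => Quotient.inductionOn₂ x y
        (fun x y h1 h2 => Quotient.sound (le0_antisymm h1 h2))
      le_total := fun x y => Quotient.inductionOn₂ x y le0_total
      lt := fun a b => le a b ∧ ¬ le b a
      lt_iff_le_not_ge := fun _ _ => Iff.rfl
      toDecidableLE := fun _ _ => Classical.dec _ }
  let fQ : Q → Q := Quotient.map (Sum.map A.f B.f)
    (by
      intro x y h
      cases x <;> cases y <;> change R iA iB _ _ at h ⊢ <;> simp only [R] at h <;>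
        simp only [Sum.map_inl, Sum.map_inr]
      · show R iA iB _ _; rw [h]; exact (amalgSetoid iA iB).refl _
      · show R iA iB _ _; exact eqr_f hA hB h
      · show R iA iB _ _; exact eqr_f hA hB h
      · show R iA iB _ _; rw [h]; exact (amalgSetoid iA iB).refl _)
  have fQ_mono : @Monotone Q Q linQ.toPreorder linQ.toPreorder fQ := by
    intro x y
    refine Quotient.inductionOn₂ x y ?_
    rintro (a | b) (a' | b') h
    · show le0 iA iB (Sum.inl (A.f a)) (Sum.inl (A.f a'))
      have h' : a ≤ a' := h
      exact A.mono h'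
    · show le0 iA iB (Sum.inl (A.f a)) (Sum.inr (B.f b'))
      have h' : ¬ below iA iB b' a := h
      exact fun hb => h' (below_f_rev hA hB hb)
    · show le0 iA iB (Sum.inr (B.f b)) (Sum.inl (A.f a'))
      have h' : below iA iB b a' ∨ eqr iA iB a' b := h
      rcases h' with hb | he
      · exact (below_f_fwd hA hB hb).imp id id
      · exact Or.inr (eqr_f hA hB he)
    · show le0 iA iB (Sum.inr (B.f b)) (Sum.inr (B.f b'))
      have h' : b ≤ b' := h
      exact B.mono h'
  let D : LinOrderMono := { carrier := Q, linOrd := linQ, f := fQ, mono := fQ_mono }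
  let jA : @OrderEmbedding A.carrier D.carrier _ D.linOrd.toLE := @OrderEmbedding.ofMapLEIff _ _ _ D.linOrd.toPreorder
    (fun a => (⟦Sum.inl a⟧ : Q)) (fun a a' => Iff.rfl)
  let jB : @OrderEmbedding B.carrier D.carrier _ D.linOrd.toLE := @OrderEmbedding.ofMapLEIff _ _ _ D.linOrd.toPreorder
    (fun b => (⟦Sum.inr b⟧ : Q)) (fun b b' => Iff.rfl)
  refine ⟨D, jA, jB, ?_, ?_, ?_, ?_⟩
  · intro a; rfl
  · intro b; rfl
  · intro c
    exact Quotient.sound (show R iA iB (Sum.inl (iA c)) (Sum.inr (iB c)) from ⟨c, rfl, rfl⟩)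
  · ext x
    constructor
    · rintro ⟨⟨a, ha⟩, ⟨b, hb⟩⟩
      have : (⟦Sum.inl a⟧ : Q) = ⟦Sum.inr b⟧ := by
        rw [show (⟦Sum.inl a⟧ : Q) = x from ha, show (⟦Sum.inr b⟧ : Q) = x from hb]
      have heq : R iA iB (Sum.inl a) (Sum.inr b) := Quotient.exact this
      obtain ⟨c, hc1, hc2⟩ := heq
      exact ⟨c, by rw [← ha]; show (⟦Sum.inl (iA c)⟧ : Q) = ⟦Sum.inl a⟧; rw [hc1]⟩
    · rintro ⟨c, hc⟩
      refine ⟨⟨iA c, hc⟩, ⟨iB c, ?_⟩⟩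
      rw [← hc]
      exact (Quotient.sound (show R iA iB (Sum.inr (iB c)) (Sum.inl (iA c)) from ⟨c, rfl, rfl⟩))
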